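/- Let (Ω, 𝓕, P) be a probability space, let u, e : Ω → ℝ be independent standard normal random variables (law gaussianReal 0 1), and let z : Ω → ℝ be a random variable taking only the values 0 and 1 with P(z = 1) = p̄ ∈ [0,1], such that z is independent of the pair (u, e). Let ρ ∈ (−1, 1), a ∈ ℝ and b ∈ ℝ with 1 + b ≠ 0, and define v := ρ·u + √(1−ρ²)·e and d := a·z + (1 + b·z)·v. Then the law of the pair (u, d) under P equals the measure on ℝ² with density (U, D) ↦ (1 − p̄)·φ₂(ρ; U, D) + p̄·(1/|1+b|)·φ₂(ρ; U, (D − a)/(1 + b)) with respect to two-dimensional Lebesgue measure, where φ₂(ρ; U, V) := (1/(2π√(1−ρ²))) · exp(−(U² − 2ρ·U·V + V²)/(2(1−ρ²))). -/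

import Mathlib

open MeasureTheory ProbabilityTheory
open scoped ENNReal

section Aux

/-- 1D change of variables for lintegrals under an affine map. -/
lemma lintegral_comp_affine_aux {G : ℝ → ℝ≥0∞} (hG : Measurable G) (α : ℝ) {c : ℝ}
    (hc : c ≠ 0) :
    ∫⁻ y, G (α + c * y) = ENNReal.ofReal |c|⁻¹ * ∫⁻ w, G w := by
  have hT : Measurable fun y : ℝ => α + c * y := by fun_prop
  have hmap : Measure.map (fun y : ℝ => α + c * y) volume
      = ENNReal.ofReal |c⁻¹| • (volume : Measure ℝ) := by
    have h1 : (fun y : ℝ => α + c * y) = (fun x : ℝ => α + x) ∘ (fun y : ℝ => c * y) := rfl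
    rw [h1, ← Measure.map_map (measurable_const_add α) (measurable_const_mul c),
      Real.map_volume_mul_left hc, Measure.map_smul, map_add_left_eq_self]
  calc ∫⁻ y, G (α + c * y)
      = ∫⁻ w, G w ∂(Measure.map (fun y : ℝ => α + c * y) volume) :=
        (lintegral_map hG hT).symm
    _ = ENNReal.ofReal |c|⁻¹ * ∫⁻ w, G w := by
        rw [hmap, lintegral_smul_measure, abs_inv, smul_eq_mul]

/-- Pushforward of a density measure on `ℝ²` under the shear-type map
`(x, y) ↦ (x, m x + c y)`. -/
lemma map_shear_aux {f : ℝ × ℝ → ℝ≥0∞} (hf : Measurable f) {m : ℝ → ℝ} (hm : Measurable m)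
    {c : ℝ} (hc : c ≠ 0) :
    Measure.map (fun p : ℝ × ℝ => (p.1, m p.1 + c * p.2))
        ((volume : Measure (ℝ × ℝ)).withDensity f)
      = (volume : Measure (ℝ × ℝ)).withDensity
          (fun q => ENNReal.ofReal |c|⁻¹ * f (q.1, (q.2 - m q.1) / c)) := by
  have hT : Measurable fun p : ℝ × ℝ => (p.1, m p.1 + c * p.2) := by fun_prop
  set g : ℝ × ℝ → ℝ≥0∞ := fun q => f (q.1, (q.2 - m q.1) / c) with hg_def
  have hg : Measurable g := by
    apply hf.comp
    fun_prop
  ext s hs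
  rw [Measure.map_apply hT hs, withDensity_apply _ (hT hs), withDensity_apply _ hs,
    ← lintegral_indicator (hT hs) _, ← lintegral_indicator hs _]
  rw [Measure.volume_eq_prod]
  rw [lintegral_prod _ ((hf.indicator (hT hs)).aemeasurable),
    lintegral_prod _ (((hg.const_mul _).indicator hs).aemeasurable)]
  refine lintegral_congr fun x => ?_
  have key : ∀ y : ℝ,
      ((fun p : ℝ × ℝ => (p.1, m p.1 + c * p.2)) ⁻¹' s).indicator f (x, y)
        = s.indicator g (x, m x + c * y) := by
    intro y
    have h2 : (m x + c * y - m x) / c = y := by field_simp; ring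
    by_cases hmem : (x, m x + c * y) ∈ s
    · rw [Set.indicator_of_mem hmem, Set.indicator_of_mem (by simpa using hmem)]
      have : g (x, m x + c * y) = f (x, y) := by
        rw [hg_def]
        simp only []
        rw [h2]
      rw [this]
    · rw [Set.indicator_of_notMem hmem, Set.indicator_of_notMem (by simpa using hmem)]
  calc ∫⁻ y, ((fun p : ℝ × ℝ => (p.1, m p.1 + c * p.2)) ⁻¹' s).indicator f (x, y)
      = ∫⁻ y, s.indicator g (x, m x + c * y) := lintegral_congr key
    _ = ENNReal.ofReal |c|⁻¹ * ∫⁻ w, s.indicator g (x, w) := by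
        exact lintegral_comp_affine_aux
          ((hg.indicator hs).comp (measurable_prodMk_left)) (m x) hc
    _ = ∫⁻ w, ENNReal.ofReal |c|⁻¹ * s.indicator g (x, w) :=
        (lintegral_const_mul _ (show Measurable fun w : ℝ => s.indicator g (x, w) from
          (hg.indicator hs).comp measurable_prodMk_left)).symm
    _ = ∫⁻ y, (s.indicator fun q => ENNReal.ofReal |c|⁻¹ * g q) (x, y) := by
        refine lintegral_congr fun w => ?_
        rw [Set.indicator_const_mul]

/-- Product of two standard gaussians as a density measure on `ℝ²`. -/
lemma gaussian_prod_withDensity_aux :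
    (gaussianReal 0 1).prod (gaussianReal 0 1)
      = (volume : Measure (ℝ × ℝ)).withDensity
          (fun p => gaussianPDF 0 1 p.1 * gaussianPDF 0 1 p.2) := by
  have h : gaussianReal 0 1 = volume.withDensity (gaussianPDF 0 1) :=
    gaussianReal_of_var_ne_zero 0 one_ne_zero
  refine Measure.prod_eq fun s t hs ht => ?_
  rw [Measure.volume_eq_prod, withDensity_apply _ (hs.prod ht), ← Measure.prod_restrict,
    lintegral_prod_mul (measurable_gaussianPDF 0 1).aemeasurable
      (measurable_gaussianPDF 0 1).aemeasurable,
    h, withDensity_apply _ hs, withDensity_apply _ ht]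

end Aux

/-- Example 3 (location-scale model 2) of Appendix B: with a binary instrument
`z ~ Bernoulli(p̄)` independent of the bivariate normal pair `(u, v)` with
correlation `ρ`, and first stage `d = az + (1 + bz)v`, the joint law of
`(u, d)` is the two-component Gaussian mixture with density
`(1−p̄)·φ₂(ρ; U, D) + p̄·(1/|1+b|)·φ₂(ρ; U, (D−a)/(1+b))` with respect to
two-dimensional Lebesgue measure. -/
theorem location_scale_binary_instrument_joint_law
    {Ω : Type*} [MeasurableSpace Ω] (P : Measure Ω) [IsProbabilityMeasure P]
    (u e z : Ω → ℝ) (hu_meas : Measurable u) (he_meas : Measurable e)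
    (hz_meas : Measurable z)
    (h_ue_indep : IndepFun u e P)
    (h_z_indep : IndepFun (fun ω => (u ω, e ω)) z P)
    (hu_law : Measure.map u P = gaussianReal 0 1)
    (he_law : Measure.map e P = gaussianReal 0 1)
    (hz_binary : ∀ ω, z ω = 0 ∨ z ω = 1)
    (pbar : ℝ) (hpbar : pbar ∈ Set.Icc (0 : ℝ) 1)
    (hz_prob : P {ω | z ω = 1} = ENNReal.ofReal pbar)
    (ρ : ℝ) (hρ : ρ ∈ Set.Ioo (-1 : ℝ) 1)
    (a b : ℝ) (hb : 1 + b ≠ 0)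
    (v d : Ω → ℝ)
    (hv : v = fun ω => ρ * u ω + Real.sqrt (1 - ρ ^ 2) * e ω)
    (hd : d = fun ω => a * z ω + (1 + b * z ω) * v ω)
    (φ₂ : ℝ → ℝ → ℝ)
    (hφ₂ : φ₂ = fun U V =>
      (1 / (2 * Real.pi * Real.sqrt (1 - ρ ^ 2)))
        * Real.exp (-(U ^ 2 - 2 * ρ * U * V + V ^ 2) / (2 * (1 - ρ ^ 2)))) :
    Measure.map (fun ω => (u ω, d ω)) P
      = (volume : Measure (ℝ × ℝ)).withDensity
          (fun q => ENNReal.ofReal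
            ((1 - pbar) * φ₂ q.1 q.2
              + pbar * (1 / |1 + b|) * φ₂ q.1 ((q.2 - a) / (1 + b)))) := by
  -- basic constants
  set σ : ℝ := Real.sqrt (1 - ρ ^ 2) with hσ_def
  have h1ρ : (0:ℝ) < 1 - ρ ^ 2 := by nlinarith [hρ.1, hρ.2]
  have hσ_pos : 0 < σ := Real.sqrt_pos.mpr h1ρ
  have hσ_ne : σ ≠ 0 := ne_of_gt hσ_pos
  have hσ_sq : σ ^ 2 = 1 - ρ ^ 2 := Real.sq_sqrt h1ρ.le
  set c : ℝ := 1 + b with hc_def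
  -- measurability of basic functions
  have hv_meas : Measurable v := by rw [hv]; fun_prop
  have hd_meas : Measurable d := by rw [hd]; fun_prop
  have hφ₂_meas : Measurable fun q : ℝ × ℝ => φ₂ q.1 q.2 := by
    rw [hφ₂]; fun_prop
  have hφ₂_nonneg : ∀ x y : ℝ, 0 ≤ φ₂ x y := by
    intro x y; rw [hφ₂]
    have : 0 < 2 * Real.pi * σ := by positivity
    positivity
  -- the shear map giving v from (u, e)
  set L : ℝ × ℝ → ℝ × ℝ := fun p => (p.1, ρ * p.1 + σ * p.2) with hL_def
  have hL_meas : Measurable L := by fun_prop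
  have huv_eq : (fun ω => (u ω, v ω)) = L ∘ fun ω => (u ω, e ω) := by
    funext ω; simp only [hv, hL_def, Function.comp_apply]
  -- joint law of (u, e)
  have h_ue : Measure.map (fun ω => (u ω, e ω)) P
      = (gaussianReal 0 1).prod (gaussianReal 0 1) := by
    have h := (indepFun_iff_map_prod_eq_prod_map_map hu_meas.aemeasurable
      he_meas.aemeasurable).mp h_ue_indep
    rw [hu_law, he_law] at h
    exact h
  -- joint law of (u, v)
  have h_uv : Measure.map (fun ω => (u ω, v ω)) P
      = (volume : Measure (ℝ × ℝ)).withDensity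
          (fun q => ENNReal.ofReal (φ₂ q.1 q.2)) := by
    rw [huv_eq, ← Measure.map_map hL_meas (hu_meas.prodMk he_meas), h_ue,
      gaussian_prod_withDensity_aux]
    have := map_shear_aux (f := fun p : ℝ × ℝ => gaussianPDF 0 1 p.1 * gaussianPDF 0 1 p.2)
      ((measurable_gaussianPDF 0 1).comp measurable_fst |>.mul
        ((measurable_gaussianPDF 0 1).comp measurable_snd))
      (m := fun x : ℝ => ρ * x) (measurable_const_mul ρ) hσ_ne
    rw [this]
    congr 1
    funext q
    -- pointwise density computation
    have hg : ∀ t : ℝ, gaussianPDFReal 0 1 t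
        = (Real.sqrt (2 * Real.pi))⁻¹ * Real.exp (-(t ^ 2) / 2) := by
      intro t; simp [gaussianPDFReal]
    have h2π : Real.sqrt (2 * Real.pi) * Real.sqrt (2 * Real.pi) = 2 * Real.pi :=
      Real.mul_self_sqrt (by positivity)
    have hexp : -((q.1 : ℝ) ^ 2) / 2 + -(((q.2 - ρ * q.1) / σ) ^ 2) / 2
        = -(q.1 ^ 2 - 2 * ρ * q.1 * q.2 + q.2 ^ 2) / (2 * (1 - ρ ^ 2)) := by
      rw [div_pow, hσ_sq]
      field_simp
      ring
    have hreal : |σ|⁻¹ * (gaussianPDFReal 0 1 q.1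
          * gaussianPDFReal 0 1 ((q.2 - ρ * q.1) / σ))
        = φ₂ q.1 q.2 := by
      rw [hg, hg, hφ₂, abs_of_pos hσ_pos]
      simp only []
      rw [show (Real.sqrt (2 * Real.pi))⁻¹ * Real.exp (-(q.1 ^ 2) / 2)
            * ((Real.sqrt (2 * Real.pi))⁻¹
              * Real.exp (-(((q.2 - ρ * q.1) / σ) ^ 2) / 2))
          = ((Real.sqrt (2 * Real.pi))⁻¹ * (Real.sqrt (2 * Real.pi))⁻¹)
            * Real.exp (-(q.1 ^ 2) / 2 + -(((q.2 - ρ * q.1) / σ) ^ 2) / 2) by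
            rw [Real.exp_add]; ring]
      rw [hexp, ← mul_inv, h2π]
      have hcoef : σ⁻¹ * (2 * Real.pi)⁻¹ = 1 / (2 * Real.pi * σ) := by
        field_simp
      rw [← mul_assoc, hcoef]
    simp only [gaussianPDF_def]
    rw [← ENNReal.ofReal_mul (gaussianPDFReal_nonneg 0 1 _),
      ← ENNReal.ofReal_mul (by positivity)]
    exact congrArg ENNReal.ofReal hreal
  -- the affine map giving d from (u, v) on {z = 1}
  set A : ℝ × ℝ → ℝ × ℝ := fun p => (p.1, a + c * p.2) with hA_def
  have hA_meas : Measurable A := by fun_prop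
  set w : Ω → ℝ := fun ω => a + c * v ω with hw_def
  have hw_meas : Measurable w := by fun_prop
  have huw_eq : (fun ω => (u ω, w ω)) = A ∘ fun ω => (u ω, v ω) := rfl
  have h_uw : Measure.map (fun ω => (u ω, w ω)) P
      = (volume : Measure (ℝ × ℝ)).withDensity
          (fun q => ENNReal.ofReal |c|⁻¹ * ENNReal.ofReal (φ₂ q.1 ((q.2 - a) / c))) := by
    rw [huw_eq, ← Measure.map_map hA_meas (hu_meas.prodMk hv_meas), h_uv]
    exact map_shear_aux (hφ₂_meas.ennreal_ofReal) (m := fun _ : ℝ => a)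
      measurable_const hb
  -- probabilities of the two branches
  have hz1_set : {ω | z ω = 1} = z ⁻¹' {1} := rfl
  have hz0_eq : z ⁻¹' {(0:ℝ)} = (z ⁻¹' {(1:ℝ)})ᶜ := by
    ext ω
    rcases hz_binary ω with h | h <;> simp [h]
  have hz1_prob : P (z ⁻¹' {(1:ℝ)}) = ENNReal.ofReal pbar := hz_prob
  have hz0_prob : P (z ⁻¹' {(0:ℝ)}) = ENNReal.ofReal (1 - pbar) := by
    rw [hz0_eq, measure_compl (hz_meas (measurableSet_singleton 1)) (measure_ne_top P _),
      hz1_prob, measure_univ, ENNReal.ofReal_sub _ hpbar.1, ENNReal.ofReal_one]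
  -- independence of (u, v)-functionals from z
  have h_uvz : IndepFun (fun ω => (u ω, v ω)) z P := by
    have := h_z_indep.comp hL_meas measurable_id
    rwa [huv_eq]
  have h_uwz : IndepFun (fun ω => (u ω, w ω)) z P := by
    have := h_uvz.comp hA_meas measurable_id
    rwa [huw_eq]
  -- mixture decomposition of the law of (u, d)
  have h_mix : Measure.map (fun ω => (u ω, d ω)) P
      = ENNReal.ofReal (1 - pbar) • Measure.map (fun ω => (u ω, v ω)) P
        + ENNReal.ofReal pbar • Measure.map (fun ω => (u ω, w ω)) P := by
    ext t ht
    rw [Measure.map_apply (hu_meas.prodMk hd_meas) ht]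
    have hsplit : (fun ω => (u ω, d ω)) ⁻¹' t
        = ((fun ω => (u ω, v ω)) ⁻¹' t ∩ z ⁻¹' {(0:ℝ)})
          ∪ ((fun ω => (u ω, w ω)) ⁻¹' t ∩ z ⁻¹' {(1:ℝ)}) := by
      ext ω
      rcases hz_binary ω with h | h
      · have hdv : d ω = v ω := by rw [hd]; simp [h]
        simp [Set.mem_preimage, h, hdv]
      · have hdw : d ω = w ω := by rw [hd, hw_def]; simp [h, hc_def]
        simp [Set.mem_preimage, h, hdw]
    have hdisj : Disjoint
        ((fun ω => (u ω, v ω)) ⁻¹' t ∩ z ⁻¹' {(0:ℝ)})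
        ((fun ω => (u ω, w ω)) ⁻¹' t ∩ z ⁻¹' {(1:ℝ)}) := by
      refine Set.disjoint_left.mpr fun ω h0 h1 => ?_
      have h0' : z ω = 0 := h0.2
      have h1' : z ω = 1 := h1.2
      rw [h0'] at h1'
      exact one_ne_zero h1'.symm
    rw [hsplit, measure_union hdisj
      (((hu_meas.prodMk hw_meas) ht).inter (hz_meas (measurableSet_singleton 1))),
      h_uvz.measure_inter_preimage_eq_mul _ _ ht (measurableSet_singleton 0),
      h_uwz.measure_inter_preimage_eq_mul _ _ ht (measurableSet_singleton 1),
      hz0_prob, hz1_prob]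
    rw [Measure.add_apply, Measure.smul_apply, Measure.smul_apply,
      Measure.map_apply (hu_meas.prodMk hv_meas) ht,
      Measure.map_apply (hu_meas.prodMk hw_meas) ht]
    rw [smul_eq_mul, smul_eq_mul]
    ring
  -- assemble
  rw [h_mix, h_uv, h_uw]
  have hm1 : Measurable fun q : ℝ × ℝ => ENNReal.ofReal (φ₂ q.1 q.2) :=
    hφ₂_meas.ennreal_ofReal
  have haux : Measurable fun q : ℝ × ℝ => (q.1, (q.2 - a) / c) := by fun_prop
  have hm2 : Measurable fun q : ℝ × ℝ =>
      ENNReal.ofReal |c|⁻¹ * ENNReal.ofReal (φ₂ q.1 ((q.2 - a) / c)) :=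
    ((hφ₂_meas.comp haux).ennreal_ofReal).const_mul _
  have hsm2 : Measurable (ENNReal.ofReal pbar • fun q : ℝ × ℝ =>
      ENNReal.ofReal |c|⁻¹ * ENNReal.ofReal (φ₂ q.1 ((q.2 - a) / c))) :=
    hm2.const_smul _
  rw [← withDensity_smul _ hm1, ← withDensity_smul _ hm2,
    ← withDensity_add_right _ hsm2]
  congr 1
  funext q
  simp only [Pi.add_apply, Pi.smul_apply, smul_eq_mul]
  rw [ENNReal.ofReal_add (mul_nonneg (by linarith [hpbar.2]) (hφ₂_nonneg _ _))
      (mul_nonneg (mul_nonneg hpbar.1 (by positivity)) (hφ₂_nonneg _ _)),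
    ENNReal.ofReal_mul (by linarith [hpbar.2]),
    ENNReal.ofReal_mul (mul_nonneg hpbar.1 (by positivity)),
    ENNReal.ofReal_mul hpbar.1]
  have habs : ENNReal.ofReal (1 / |c|) = ENNReal.ofReal |c|⁻¹ := by
    rw [one_div]
  rw [habs]
  ring
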